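/- Let F be a field and q ∈ F with q ≠ 0 and q ≠ ±1. Let R = F[c][K, K^{−1}] be the ring of Laurent polynomials in the variable K over the polynomial ring F[c], and let φ be the F-algebra automorphism of R determined by φ(c) = c and φ(K) = q^{−2}K. Then every ideal J of R with φ(J) ⊆ J is generated, as an ideal of R, by its set of φ-fixed elements {r ∈ J : φ(r) = r}. -/

import Mathlib

open LaurentPolynomial

namespace Stmt16Aux

variable {F : Type*} [Field F]

lemma phiC (φ : LaurentPolynomial (Polynomial F) ≃ₐ[F] LaurentPolynomial (Polynomial F))
    (hφc : φ (C Polynomial.X) = C Polynomial.X) (p : Polynomial F) :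
    φ (C p) = C p := by
  have key : (φ.toAlgHom.toRingHom.comp (C : Polynomial F →+* _)) = (C : Polynomial F →+* _) := by
    apply Polynomial.ringHom_ext
    · intro a
      have := φ.commutes a
      simpa [LaurentPolynomial.algebraMap_apply, Polynomial.algebraMap_eq] using this
    · simpa using hφc
  exact DFunLike.congr_fun key p

lemma phiT (φ : LaurentPolynomial (Polynomial F) ≃ₐ[F] LaurentPolynomial (Polynomial F))
    {s : F} (hs0 : s ≠ 0)
    (hφK : φ (T 1) = C (Polynomial.C s) * T 1) (n : ℤ) :
    φ (T n) = C (Polynomial.C (s ^ n)) * T n := by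
  have hKinv : φ (T (-1)) = C (Polynomial.C s⁻¹) * T (-1) := by
    have h1 : (C (Polynomial.C s) * T 1) * (C (Polynomial.C s⁻¹) * T (-1))
        = (1 : LaurentPolynomial (Polynomial F)) := by
      rw [mul_mul_mul_comm, ← map_mul, ← map_mul, ← T_add]
      norm_num [mul_inv_cancel₀ hs0]
    calc φ (T (-1))
        = φ (T (-1)) * ((C (Polynomial.C s) * T 1) * (C (Polynomial.C s⁻¹) * T (-1))) := by
          rw [h1, mul_one]
      _ = (φ (T (-1)) * φ (T 1)) * (C (Polynomial.C s⁻¹) * T (-1)) := by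
          rw [hφK]; ring
      _ = φ (T (-1) * T 1) * (C (Polynomial.C s⁻¹) * T (-1)) := by rw [map_mul]
      _ = C (Polynomial.C s⁻¹) * T (-1) := by
          rw [← T_add]; norm_num
  induction n using Int.induction_on with
  | zero => simp
  | succ i hi =>
      rw [T_add, map_mul, hi, hφK, mul_mul_mul_comm, ← map_mul, ← map_mul, ← T_add,
        ← zpow_add_one₀ hs0]
  | pred i hi =>
      rw [show (-(i:ℤ) - 1) = (-(i:ℤ)) - 1 from rfl, T_sub, map_mul, hi, hKinv,
        mul_mul_mul_comm, ← map_mul, ← map_mul, ← T_sub, ← zpow_sub_one₀ hs0]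

lemma phi_coeff (φ : LaurentPolynomial (Polynomial F) ≃ₐ[F] LaurentPolynomial (Polynomial F))
    {s : F} (hs0 : s ≠ 0)
    (hφc : φ (C Polynomial.X) = C Polynomial.X)
    (hφK : φ (T 1) = C (Polynomial.C s) * T 1)
    (f : LaurentPolynomial (Polynomial F)) (n : ℤ) :
    (φ f).coeff n = Polynomial.C (s ^ n) * f.coeff n := by
  classical
  have hsingle : ∀ (m : ℤ) (a : Polynomial F),
      φ (AddMonoidAlgebra.single m a) = AddMonoidAlgebra.single m (Polynomial.C (s ^ m) * a) := by
    intro m a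
    rw [single_eq_C_mul_T, map_mul, phiC φ hφc, phiT φ hs0 hφK, single_eq_C_mul_T, map_mul]
    ring
  conv_lhs => rw [← AddMonoidAlgebra.sum_coeff_single f, map_finsuppSum]
  simp only [hsingle]
  rw [AddMonoidAlgebra.coeff_finsuppSum, Finsupp.sum_apply]
  simp only [AddMonoidAlgebra.coeff_single, Finsupp.single_apply]
  rw [Finsupp.sum_ite_eq' f.coeff n (fun m a => Polynomial.C (s ^ m) * a)]
  split_ifs with h
  · rfl
  · rw [Finsupp.notMem_support_iff.mp h, mul_zero]

open Classical in
/-- The eigencomponent of a Laurent polynomial for eigenvalue `l` of the map `T n ↦ s^n T n`. -/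
noncomputable def P (s l : F) (f : LaurentPolynomial (Polynomial F)) :
    LaurentPolynomial (Polynomial F) :=
  AddMonoidAlgebra.ofCoeff (Finsupp.filter (fun n : ℤ => s ^ n = l) f.coeff)

open Classical in
lemma P_apply (s l : F) (f : LaurentPolynomial (Polynomial F)) (n : ℤ) :
    (P s l f).coeff n = if s ^ n = l then f.coeff n else 0 := rfl

lemma C_mul_coeff (p : Polynomial F) (f : LaurentPolynomial (Polynomial F)) (n : ℤ) :
    (C p * f).coeff n = p * f.coeff n :=
  AddMonoidAlgebra.coeff_single_zero_mul f p n

end Stmt16Aux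
/-- Let `F` be a field and `q ∈ F` with `q ≠ 0`, `q ≠ ±1`.  Let
`R = F[c][K, K⁻¹]` and let `φ` be the `F`-algebra automorphism of `R` with `φ(c) = c`
and `φ(K) = q⁻²K`.  Then every `φ`-stable ideal of `R` is generated, as an ideal of `R`,
by its set of `φ`-fixed elements. -/
theorem stmt_16 {F : Type*} [Field F] (q : F) (hq0 : q ≠ 0) (hq1 : q ≠ 1)
    (hqm1 : q ≠ -1)
    (φ : LaurentPolynomial (Polynomial F) ≃ₐ[F] LaurentPolynomial (Polynomial F))
    (hφc : φ (LaurentPolynomial.C Polynomial.X) = LaurentPolynomial.C Polynomial.X)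
    (hφK : φ (LaurentPolynomial.T 1) =
      LaurentPolynomial.C (Polynomial.C ((q ^ 2)⁻¹)) * LaurentPolynomial.T 1)
    (J : Ideal (LaurentPolynomial (Polynomial F)))
    (hstab : ∀ f ∈ J, φ f ∈ J) :
    J = Ideal.span {f : LaurentPolynomial (Polynomial F) | f ∈ J ∧ φ f = f} := by
  classical
  set s : F := (q ^ 2)⁻¹ with hs
  have hs0 : s ≠ 0 := inv_ne_zero (pow_ne_zero 2 hq0)
  have hT := Stmt16Aux.phiT φ hs0 hφK
  have hcoeff := Stmt16Aux.phi_coeff φ hs0 hφc hφK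
  set S : Set (LaurentPolynomial (Polynomial F)) := {f | f ∈ J ∧ φ f = f} with hS
  -- filter of missing eigenvalue is zero
  have hfilter0 : ∀ (f : LaurentPolynomial (Polynomial F)) (l : F),
      l ∉ (f.coeff.support).image (fun n : ℤ => s ^ n) →
      Stmt16Aux.P s l f = 0 := by
    intro f l hl
    refine LaurentPolynomial.ext fun n => ?_
    rw [Stmt16Aux.P_apply]
    split_ifs with h
    · by_contra hfn
      exact hl (Finset.mem_image.mpr ⟨n, Finsupp.mem_support_iff.mpr hfn, h⟩)
    · rfl
  -- Claim C: eigencomponents of elements of J lie in J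
  have claimC : ∀ k : ℕ, ∀ f ∈ J, ((f.coeff.support).image (fun n : ℤ => s ^ n)).card ≤ k →
      ∀ l : F, Stmt16Aux.P s l f ∈ J := by
    intro k
    induction k with
    | zero =>
      intro f hf hcard l
      have himg := Finset.card_eq_zero.mp (Nat.le_zero.mp hcard)
      rw [hfilter0 f l (by simp [himg])]
      exact J.zero_mem
    | succ k ih =>
      intro f hf hcard l
      by_cases hl : l ∈ (f.coeff.support).image (fun n : ℤ => s ^ n)
      · by_cases hall : ∀ m ∈ f.coeff.support, s ^ m = l
        · have heq : Stmt16Aux.P s l f = f := by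
            refine LaurentPolynomial.ext fun n => ?_
            rw [Stmt16Aux.P_apply]
            split_ifs with h
            · rfl
            · exact (Finsupp.notMem_support_iff.mp (fun hn => h (hall n hn))).symm
          rw [heq]; exact hf
        · push_neg at hall
          obtain ⟨m, hm, hml⟩ := hall
          set μ := s ^ m with hμ
          have hμmem : μ ∈ (f.coeff.support).image (fun n : ℤ => s ^ n) :=
            Finset.mem_image.mpr ⟨m, hm, rfl⟩
          set g := φ f - LaurentPolynomial.C (Polynomial.C μ) * f with hgdef
          have hgJ : g ∈ J := J.sub_mem (hstab f hf) (J.mul_mem_left _ hf)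
          have hgcoeff : ∀ n : ℤ, g.coeff n = Polynomial.C (s ^ n - μ) * f.coeff n := by
            intro n
            rw [hgdef, AddMonoidAlgebra.coeff_sub, Finsupp.sub_apply, hcoeff, Stmt16Aux.C_mul_coeff, map_sub, sub_mul]
          have hgsupp : (g.coeff.support).image (fun n : ℤ => s ^ n) ⊆
              ((f.coeff.support).image (fun n : ℤ => s ^ n)).erase μ := by
            intro x hx
            obtain ⟨n, hn, rfl⟩ := Finset.mem_image.mp hx
            have hgn : g.coeff n ≠ 0 := Finsupp.mem_support_iff.mp hn
            rw [hgcoeff] at hgn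
            have hne : s ^ n ≠ μ := by
              intro h; apply hgn; rw [h]; simp
            have hfn : f.coeff n ≠ 0 := by
              intro h; apply hgn; rw [h, mul_zero]
            exact Finset.mem_erase.mpr
              ⟨hne, Finset.mem_image.mpr ⟨n, Finsupp.mem_support_iff.mpr hfn, rfl⟩⟩
          have hgcard : ((g.coeff.support).image (fun n : ℤ => s ^ n)).card ≤ k := by
            have h1 := Finset.card_le_card hgsupp
            rw [Finset.card_erase_of_mem hμmem] at h1
            omega
          have hPg := ih g hgJ hgcard l
          have hlμ : l - μ ≠ 0 := sub_ne_zero.mpr (Ne.symm hml)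
          have hrel : Stmt16Aux.P s l g =
              LaurentPolynomial.C (Polynomial.C (l - μ)) *
                Stmt16Aux.P s l f := by
            refine LaurentPolynomial.ext fun n => ?_
            rw [Stmt16Aux.C_mul_coeff, Stmt16Aux.P_apply, Stmt16Aux.P_apply]
            split_ifs with h
            · rw [hgcoeff n, h]
            · rw [mul_zero]
          have hkey : Stmt16Aux.P s l f =
              LaurentPolynomial.C (Polynomial.C (l - μ)⁻¹) *
                Stmt16Aux.P s l g := by
            rw [hrel, ← mul_assoc, ← map_mul, ← map_mul, inv_mul_cancel₀ hlμ]
            simp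
          rw [hkey]
          exact J.mul_mem_left _ hPg
      · rw [hfilter0 f l hl]
        exact J.zero_mem
  -- Claim D: every element of J lies in the span of the fixed elements
  have claimD : ∀ k : ℕ, ∀ f ∈ J, ((f.coeff.support).image (fun n : ℤ => s ^ n)).card ≤ k →
      f ∈ Ideal.span S := by
    intro k
    induction k with
    | zero =>
      intro f hf hcard
      have himg := Finset.card_eq_zero.mp (Nat.le_zero.mp hcard)
      have hsupp : f.coeff.support = ∅ := Finset.image_eq_empty.mp himg
      rw [AddMonoidAlgebra.coeff_eq_zero.mp (Finsupp.support_eq_empty.mp hsupp)]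
      exact Submodule.zero_mem _
    | succ k ih =>
      intro f hf hcard
      rcases Finset.eq_empty_or_nonempty (f.coeff.support) with hsupp | ⟨n₀, hn₀⟩
      · rw [AddMonoidAlgebra.coeff_eq_zero.mp (Finsupp.support_eq_empty.mp hsupp)]
        exact Submodule.zero_mem _
      · set l₀ := s ^ n₀ with hl₀
        set f₀ : LaurentPolynomial (Polynomial F) := Stmt16Aux.P s l₀ f with hf₀def
        have hf₀J : f₀ ∈ J := claimC (k + 1) f hf hcard l₀
        have hφf₀ : φ f₀ = LaurentPolynomial.C (Polynomial.C l₀) * f₀ := by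
          refine LaurentPolynomial.ext fun n => ?_
          rw [hcoeff, Stmt16Aux.C_mul_coeff]
          by_cases h : s ^ n = l₀
          · rw [h]
          · have h0 : f₀.coeff n = 0 := by rw [hf₀def, Stmt16Aux.P_apply, if_neg h]
            rw [h0, mul_zero, mul_zero]
        have hfixJ : LaurentPolynomial.T (-n₀) * f₀ ∈ J := J.mul_mem_left _ hf₀J
        have hfix : φ (LaurentPolynomial.T (-n₀) * f₀) = LaurentPolynomial.T (-n₀) * f₀ := by
          rw [map_mul, hT, hφf₀]
          calc (LaurentPolynomial.C (Polynomial.C (s ^ (-n₀))) * LaurentPolynomial.T (-n₀)) *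
              (LaurentPolynomial.C (Polynomial.C l₀) * f₀)
              = (LaurentPolynomial.C (Polynomial.C (s ^ (-n₀))) *
                  LaurentPolynomial.C (Polynomial.C l₀)) *
                  (LaurentPolynomial.T (-n₀) * f₀) := by ring
            _ = LaurentPolynomial.T (-n₀) * f₀ := by
                rw [← map_mul, ← map_mul, hl₀, ← zpow_add₀ hs0]
                simp
        have hf₀span : f₀ ∈ Ideal.span S := by
          have hTT : f₀ = LaurentPolynomial.T n₀ * (LaurentPolynomial.T (-n₀) * f₀) := by
            rw [← mul_assoc, ← LaurentPolynomial.T_add]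
            simp
          rw [hTT]
          exact Ideal.mul_mem_left _ _
            (Ideal.subset_span (show _ ∈ S from ⟨hfixJ, hfix⟩))
        set g := f - f₀ with hgdef
        have hgJ : g ∈ J := J.sub_mem hf hf₀J
        have hgcoeff : ∀ n : ℤ, g.coeff n = if s ^ n = l₀ then 0 else f.coeff n := by
          intro n
          rw [hgdef, AddMonoidAlgebra.coeff_sub, Finsupp.sub_apply, hf₀def, Stmt16Aux.P_apply]
          split_ifs with h
          · exact sub_self _
          · exact sub_zero _
        have hl₀mem : l₀ ∈ (f.coeff.support).image (fun n : ℤ => s ^ n) :=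
          Finset.mem_image.mpr ⟨n₀, hn₀, rfl⟩
        have hgsupp : (g.coeff.support).image (fun n : ℤ => s ^ n) ⊆
            ((f.coeff.support).image (fun n : ℤ => s ^ n)).erase l₀ := by
          intro x hx
          obtain ⟨n, hn, rfl⟩ := Finset.mem_image.mp hx
          have hgn := Finsupp.mem_support_iff.mp hn
          rw [hgcoeff] at hgn
          split_ifs at hgn with h
          · exact absurd rfl hgn
          · exact Finset.mem_erase.mpr
              ⟨h, Finset.mem_image.mpr ⟨n, Finsupp.mem_support_iff.mpr hgn, rfl⟩⟩
        have hgcard : ((g.coeff.support).image (fun n : ℤ => s ^ n)).card ≤ k := by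
          have h1 := Finset.card_le_card hgsupp
          rw [Finset.card_erase_of_mem hl₀mem] at h1
          omega
        have hgspan := ih g hgJ hgcard
        have hfeq : f = f₀ + g := by rw [hgdef]; ring
        rw [hfeq]
        exact Submodule.add_mem _ hf₀span hgspan
  refine le_antisymm ?_ ?_
  · intro f hf
    exact claimD ((f.coeff.support).image (fun n : ℤ => s ^ n)).card f hf le_rfl
  · rw [Ideal.span_le]
    intro f hf
    exact hf.1
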